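/- (Koebe Principle for maps with non-positive Schwarzian derivative.) Let T : [0,1] → [0,1] be a C² map such that x ↦ 1/√|T'(x)| is locally convex on every interval where T' does not vanish. Let W ⊆ W' be intervals and n ≥ 1 be such that Tⁿ : W' → Tⁿ(W') is a C² diffeomorphism. If Tⁿ(W') contains a δ-scaled neighborhood of Tⁿ(W), i.e. both components of Tⁿ(W') ∖ Tⁿ(W) have length at least δ·|Tⁿ(W)|, then the distortion of Tⁿ on W is bounded: sup_{s,t ∈ W} |(Tⁿ)'(s)| / |(Tⁿ)'(t)| ≤ ((1+δ)/δ)². -/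

import Mathlib

open Set

open intervalIntegral Filter Topology

set_option linter.unusedVariables false


open Set intervalIntegral

namespace KoebeAux

lemma hval_pos {r : ℝ} (hr : r ≠ 0) : 0 < 1 / Real.sqrt |r| := by
  have : 0 < |r| := abs_pos.mpr hr
  positivity

/-- exact integral of the inverse square of a linear function -/
lemma integral_inv_sq_linear {A k x y : ℝ} (hxy : x ≤ y) (hA : 0 < A)
    (hB : 0 < A + k * (y - x)) :
    ∫ t in x..y, (A + k * (t - x))⁻¹ ^ 2 = (y - x) / (A * (A + k * (y - x))) := by
  have hpos : ∀ t ∈ Icc x y, 0 < A + k * (t - x) := by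
    intro t ht
    rcases le_or_gt 0 k with hk | hk
    · nlinarith [ht.1, ht.2]
    · nlinarith [ht.1, ht.2]
  have hcont : ContinuousOn (fun t => (A + k * (t - x))⁻¹ ^ 2) (uIcc x y) := by
    rw [uIcc_of_le hxy]
    exact ((continuousOn_const.add ((continuousOn_id.sub continuousOn_const).const_smul
      k)).inv₀ (fun t ht => (hpos t ht).ne')).pow 2
  rcases eq_or_ne k 0 with rfl | hk
  · simp only [zero_mul, add_zero]
    rw [integral_const, smul_eq_mul, sq, ← mul_inv, div_eq_mul_inv]
  · have hFTC : ∀ t ∈ uIcc x y,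
        HasDerivAt (fun t => -(k * (A + k * (t - x)))⁻¹) ((A + k * (t - x))⁻¹ ^ 2) t := by
      intro t ht
      rw [uIcc_of_le hxy] at ht
      have hl : HasDerivAt (fun t => k * (A + k * (t - x))) (k * k) t := by
        have : HasDerivAt (fun t : ℝ => A + k * (t - x)) k t := by
          simpa using (((hasDerivAt_id t).sub_const x).const_mul k).const_add A
        simpa using this.const_mul k
      have hne : k * (A + k * (t - x)) ≠ 0 := mul_ne_zero hk (hpos t ht).ne'
      have := (hl.inv hne).neg
      refine (this : HasDerivAt (fun t => -(k * (A + k * (t - x)))⁻¹) _ t).congr_deriv (Eq.symm ?_)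
      have := (hpos t ht).ne'
      field_simp
    rw [integral_eq_sub_of_hasDerivAt hFTC (hcont.intervalIntegrable)]
    have h1 : A + k * (y - x) ≠ 0 := hB.ne'
    have h2 : A + k * (x - x) = A := by ring
    rw [h2]
    field_simp
    ring

/-- chord comparison from below -/
lemma integral_inv_sq_ge {h : ℝ → ℝ} {x y A k : ℝ} (hxy : x ≤ y) (hA : 0 < A)
    (hB : 0 < A + k * (y - x)) (hcont : ContinuousOn h (Icc x y))
    (hpos : ∀ t ∈ Icc x y, 0 < h t)
    (hchord : ∀ t ∈ Icc x y, h t ≤ A + k * (t - x)) :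
    (y - x) / (A * (A + k * (y - x))) ≤ ∫ t in x..y, (h t)⁻¹ ^ 2 := by
  rw [← integral_inv_sq_linear hxy hA hB]
  have hlpos : ∀ t ∈ Icc x y, 0 < A + k * (t - x) :=
    fun t ht => lt_of_lt_of_le (hpos t ht) (hchord t ht)
  have hlcont : ContinuousOn (fun t => (A + k * (t - x))⁻¹ ^ 2) (Icc x y) :=
    ((continuousOn_const.add ((continuousOn_id.sub continuousOn_const).const_smul
      k)).inv₀ (fun t ht => (hlpos t ht).ne')).pow 2
  have hhcont : ContinuousOn (fun t => (h t)⁻¹ ^ 2) (Icc x y) :=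
    (hcont.inv₀ (fun t ht => (hpos t ht).ne')).pow 2
  apply integral_mono_on hxy
  · exact (hlcont.mono (by rw [uIcc_of_le hxy])).intervalIntegrable
  · exact (hhcont.mono (by rw [uIcc_of_le hxy])).intervalIntegrable
  · intro t ht
    have h1 := hpos t ht
    have h2 := hchord t ht
    have h3 := hlpos t ht
    have hi : (A + k * (t - x))⁻¹ ≤ (h t)⁻¹ := by
      apply inv_anti₀ h1 h2
    calc (A + k * (t - x))⁻¹ ^ 2 ≤ (h t)⁻¹ ^ 2 := by
          apply pow_le_pow_left₀ (by positivity) hi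
      _ = _ := rfl

/-- comparison from above, beyond the chord -/
lemma integral_inv_sq_le {h : ℝ → ℝ} {x y A k : ℝ} (hxy : x ≤ y) (hA : 0 < A) (hk : 0 < k)
    (hcont : ContinuousOn h (Icc x y))
    (hline : ∀ t ∈ Icc x y, A + k * (t - x) ≤ h t) :
    ∫ t in x..y, (h t)⁻¹ ^ 2 ≤ 1 / (k * A) := by
  have hlpos : ∀ t ∈ Icc x y, 0 < A + k * (t - x) := by
    intro t ht; nlinarith [ht.1]
  have hpos : ∀ t ∈ Icc x y, 0 < h t :=
    fun t ht => lt_of_lt_of_le (hlpos t ht) (hline t ht)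
  have hB : 0 < A + k * (y - x) := hlpos y ⟨hxy, le_rfl⟩
  have step1 : ∫ t in x..y, (h t)⁻¹ ^ 2 ≤ ∫ t in x..y, (A + k * (t - x))⁻¹ ^ 2 := by
    have hlcont : ContinuousOn (fun t => (A + k * (t - x))⁻¹ ^ 2) (Icc x y) :=
      ((continuousOn_const.add ((continuousOn_id.sub continuousOn_const).const_smul
        k)).inv₀ (fun t ht => (hlpos t ht).ne')).pow 2
    have hhcont : ContinuousOn (fun t => (h t)⁻¹ ^ 2) (Icc x y) :=
      (hcont.inv₀ (fun t ht => (hpos t ht).ne')).pow 2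
    apply integral_mono_on hxy
    · exact (hhcont.mono (by rw [uIcc_of_le hxy])).intervalIntegrable
    · exact (hlcont.mono (by rw [uIcc_of_le hxy])).intervalIntegrable
    · intro t ht
      have h3 := hlpos t ht
      have h4 := hpos t ht
      have hi : (h t)⁻¹ ≤ (A + k * (t - x))⁻¹ := by
        exact inv_anti₀ h3 (hline t ht)
      apply pow_le_pow_left₀ (by positivity) hi
  rw [integral_inv_sq_linear hxy hA hB] at step1
  refine le_trans step1 ?_
  rw [div_le_div_iff₀ (by positivity) (by positivity)]
  nlinarith

lemma intInt {h : ℝ → ℝ} {a b u v : ℝ} (hcont : ContinuousOn h (Icc a b))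
    (hpos : ∀ t ∈ Icc a b, 0 < h t) (huv : u ≤ v) (hu : u ∈ Icc a b) (hv : v ∈ Icc a b) :
    IntervalIntegrable (fun t => (h t)⁻¹ ^ 2) MeasureTheory.volume u v := by
  apply ContinuousOn.intervalIntegrable
  rw [uIcc_of_le huv]
  have hsub : Icc u v ⊆ Icc a b := Icc_subset_Icc hu.1 hv.2
  exact ((hcont.mono hsub).inv₀ fun t ht => (hpos t (hsub ht)).ne').pow 2

end KoebeAux

open Set intervalIntegral Filter Topology

namespace KoebeAux2

lemma convexOn_le_secant {h : ℝ → ℝ} {s : Set ℝ} (hc : ConvexOn ℝ s h) {p q t : ℝ}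
    (hp : p ∈ s) (hq : q ∈ s) (hpq : p < q) (ht : t ∈ Icc p q) :
    h t ≤ h p + (h q - h p) / (q - p) * (t - p) := by
  have hqp : (0:ℝ) < q - p := by linarith
  have hα0 : 0 ≤ (q - t) / (q - p) := div_nonneg (by linarith [ht.2]) hqp.le
  have hβ0 : 0 ≤ (t - p) / (q - p) := div_nonneg (by linarith [ht.1]) hqp.le
  have hsum : (q - t) / (q - p) + (t - p) / (q - p) = 1 := by field_simp; ring
  have hcomb := hc.2 hp hq hα0 hβ0 hsum
  have he : ((q - t) / (q - p)) • p + ((t - p) / (q - p)) • q = t := by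
    simp only [smul_eq_mul]; field_simp; ring
  rw [he] at hcomb
  refine le_trans hcomb (le_of_eq ?_)
  simp only [smul_eq_mul]
  field_simp
  ring

lemma convexOn_beyond_secant {h : ℝ → ℝ} {s : Set ℝ} (hc : ConvexOn ℝ s h) {p q y : ℝ}
    (hp : p ∈ s) (hy : y ∈ s) (hpq : p < q) (hqy : q ≤ y) :
    h p + (h q - h p) / (q - p) * (y - p) ≤ h y := by
  have hD1 : (0:ℝ) < q - p := by linarith
  rcases eq_or_lt_of_le hqy with rfl | hqy'
  · have : h p + (h q - h p) / (q - p) * (q - p) = h q := by field_simp; ring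
    linarith [this.le]
  · have hD2 : (0:ℝ) < y - p := by linarith
    have hα0 : 0 ≤ (y - q) / (y - p) := div_nonneg (by linarith) hD2.le
    have hβ0 : 0 ≤ (q - p) / (y - p) := div_nonneg (by linarith) hD2.le
    have hsum : (y - q) / (y - p) + (q - p) / (y - p) = 1 := by field_simp; ring
    have hcomb := hc.2 hp hy hα0 hβ0 hsum
    have he : ((y - q) / (y - p)) • p + ((q - p) / (y - p)) • y = q := by
      simp only [smul_eq_mul]; field_simp; ring
    rw [he] at hcomb
    simp only [smul_eq_mul] at hcomb
    have key : h q * (y - p) ≤ (y - q) * h p + (q - p) * h y := by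
      have h2 : ((y - q) / (y - p)) * h p + ((q - p) / (y - p)) * h y
          = ((y - q) * h p + (q - p) * h y) / (y - p) := by ring
      rw [h2] at hcomb
      rw [← le_div_iff₀ hD2]
      exact hcomb
    have expand : h p + (h q - h p) / (q - p) * (y - p)
        = (h p * (q - p) + (h q - h p) * (y - p)) / (q - p) := by field_simp <;> ring
    rw [expand, div_le_iff₀ hD1]
    nlinarith [key]

lemma convexOn_reflect {h : ℝ → ℝ} {a b : ℝ} (hc : ConvexOn ℝ (Icc a b) h) :
    ConvexOn ℝ (Icc a b) (fun x => h (a + b - x)) := by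
  refine ⟨convex_Icc a b, ?_⟩
  intro x hx y hy α β hα hβ hs
  simp only [smul_eq_mul]
  have hx' : a + b - x ∈ Icc a b := ⟨by linarith [hx.2], by linarith [hx.1]⟩
  have hy' : a + b - y ∈ Icc a b := ⟨by linarith [hy.2], by linarith [hy.1]⟩
  have he : a + b - (α * x + β * y) = α * (a + b - x) + β * (a + b - y) := by
    have : α * (a + b) + β * (a + b) = a + b := by
      rw [← add_mul, hs, one_mul]
    nlinarith [this]
  rw [he]
  have := hc.2 hx' hy' hα hβ hs
  simpa only [smul_eq_mul] using this

lemma convexOn_of_G {h : ℝ → ℝ} {a b : ℝ}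
    (hcont : ContinuousOn h (Icc a b)) (hpos : ∀ x ∈ Icc a b, 0 < h x)
    (hG : ∀ x ∈ Icc a b, ∀ y ∈ Icc a b, x ≤ y →
      (y - x) / (h x * h y) ≤ ∫ t in x..y, (h t)⁻¹ ^ 2) :
    ConvexOn ℝ (Icc a b) h := by
  have core : ∀ p ∈ Icc a b, ∀ r ∈ Icc a b, p < r → ∀ q ∈ Ioo p r,
      h q ≤ h p + (h r - h p) / (r - p) * (q - p) := by
    intro p hp r hr hpr q hq
    by_contra hcon
    push_neg at hcon
    set k := (h r - h p) / (r - p) with hk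
    set L := fun t : ℝ => h p + k * (t - p) with hL
    have hrp : (0:ℝ) < r - p := by linarith [hq.1, hq.2]
    have hLp : L p = h p := by simp [hL]
    have hLr : L r = h r := by simp only [hL, hk]; field_simp; ring
    have hIccsub : Icc p r ⊆ Icc a b := Icc_subset_Icc hp.1 hr.2
    have hqab : q ∈ Icc a b := hIccsub ⟨hq.1.le, hq.2.le⟩
    have hLcont : Continuous L := by fun_prop
    have hconq : L q < h q := hcon
    -- right piece
    have hZrcl : IsClosed {t | t ∈ Icc q r ∧ h t ≤ L t} := by
      have : {t | t ∈ Icc q r ∧ h t ≤ L t}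
          = Icc q r ∩ (fun t => h t - L t) ⁻¹' Iic 0 := by
        ext t; simp [sub_nonpos]
      rw [this]
      exact ContinuousOn.preimage_isClosed_of_isClosed
        ((hcont.mono (Icc_subset_Icc hqab.1 hr.2)).sub hLcont.continuousOn)
        isClosed_Icc isClosed_Iic
    have hZrne : r ∈ {t | t ∈ Icc q r ∧ h t ≤ L t} :=
      ⟨⟨hq.2.le, le_rfl⟩, hLr.ge⟩
    have hbddr : BddBelow {t | t ∈ Icc q r ∧ h t ≤ L t} := ⟨q, fun t ht => ht.1.1⟩
    set r' := sInf {t | t ∈ Icc q r ∧ h t ≤ L t} with hr'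
    have hr'mem := hZrcl.csInf_mem ⟨r, hZrne⟩ hbddr
    have hr'ab : r' ∈ Icc a b := hIccsub ⟨hq.1.le.trans hr'mem.1.1, hr'mem.1.2⟩
    have hqr' : q < r' := by
      rcases eq_or_lt_of_le hr'mem.1.1 with he | hlt
      · exact absurd (he ▸ hr'mem.2) (not_le.mpr hconq)
      · exact hlt
    have habove : ∀ t, q ≤ t → t < r' → L t < h t := by
      intro t h1 h2
      by_contra hle
      push_neg at hle
      have htm : t ∈ {t | t ∈ Icc q r ∧ h t ≤ L t} :=
        ⟨⟨h1, h2.le.trans hr'mem.1.2⟩, hle⟩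
      exact absurd (csInf_le hbddr htm) (not_le.mpr h2)
    -- left piece
    have hZlcl : IsClosed {t | t ∈ Icc p q ∧ h t ≤ L t} := by
      have : {t | t ∈ Icc p q ∧ h t ≤ L t}
          = Icc p q ∩ (fun t => h t - L t) ⁻¹' Iic 0 := by
        ext t; simp [sub_nonpos]
      rw [this]
      exact ContinuousOn.preimage_isClosed_of_isClosed
        ((hcont.mono (Icc_subset_Icc hp.1 hqab.2)).sub hLcont.continuousOn)
        isClosed_Icc isClosed_Iic
    have hZlne : p ∈ {t | t ∈ Icc p q ∧ h t ≤ L t} := ⟨⟨le_rfl, hq.1.le⟩, hLp.ge⟩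
    have hbddl : BddAbove {t | t ∈ Icc p q ∧ h t ≤ L t} := ⟨q, fun t ht => ht.1.2⟩
    set p' := sSup {t | t ∈ Icc p q ∧ h t ≤ L t} with hp'
    have hp'mem := hZlcl.csSup_mem ⟨p, hZlne⟩ hbddl
    have hp'ab : p' ∈ Icc a b := hIccsub ⟨hp'mem.1.1, hp'mem.1.2.trans hq.2.le⟩
    have hp'q : p' < q := by
      rcases eq_or_lt_of_le hp'mem.1.2 with he | hlt
      · exact absurd (he ▸ hp'mem.2) (not_le.mpr hconq)
      · exact hlt
    have hbelow : ∀ t, p' < t → t ≤ q → L t < h t := by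
      intro t h1 h2
      by_contra hle
      push_neg at hle
      have htm : t ∈ {t | t ∈ Icc p q ∧ h t ≤ L t} :=
        ⟨⟨hp'mem.1.1.trans h1.le, h2⟩, hle⟩
      exact absurd (le_csSup hbddl htm) (not_le.mpr h1)
    have hp'r' : p' < r' := hp'q.trans hqr'
    have hstrict : ∀ t ∈ Ioo p' r', L t < h t := by
      intro t ht
      rcases le_or_gt t q with h1 | h1
      · exact hbelow t ht.1 h1
      · exact habove t h1.le ht.2
    -- endpoint equalities
    have hpe : h p' = L p' := by
      refine le_antisymm hp'mem.2 ?_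
      have hsub : Ioc p' q ⊆ Icc a b := fun t ht =>
        ⟨hp'ab.1.trans ht.1.le, ht.2.trans hqab.2⟩
      have hcw : Tendsto (fun t => h t - L t) (𝓝[Ioc p' q] p') (𝓝 (h p' - L p')) := by
        apply Filter.Tendsto.sub
        · exact (hcont p' hp'ab).mono hsub
        · exact hLcont.continuousAt.continuousWithinAt
      rw [nhdsWithin_Ioc_eq_nhdsGT hp'q] at hcw
      have hev : ∀ᶠ t in 𝓝[>] p', 0 ≤ h t - L t := by
        filter_upwards [Ioc_mem_nhdsGT_of_mem ⟨le_rfl, hp'q⟩] with t ht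
        exact sub_nonneg.mpr (hbelow t ht.1 ht.2).le
      have := ge_of_tendsto hcw hev
      linarith
    have hre : h r' = L r' := by
      refine le_antisymm hr'mem.2 ?_
      have hsub : Ico q r' ⊆ Icc a b := fun t ht =>
        ⟨hqab.1.trans ht.1, ht.2.le.trans hr'ab.2⟩
      have hcw : Tendsto (fun t => h t - L t) (𝓝[Ico q r'] r') (𝓝 (h r' - L r')) := by
        apply Filter.Tendsto.sub
        · exact (hcont r' hr'ab).mono hsub
        · exact hLcont.continuousAt.continuousWithinAt
      rw [nhdsWithin_Ico_eq_nhdsLT hqr'] at hcw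
      have hev : ∀ᶠ t in 𝓝[<] r', 0 ≤ h t - L t := by
        filter_upwards [Ico_mem_nhdsLT_of_mem ⟨hqr', le_rfl⟩] with t ht
        exact sub_nonneg.mpr (habove t ht.1 ht.2).le
      have := ge_of_tendsto hcw hev
      linarith
    -- the contradiction via integral comparison
    have hLt : ∀ t, L t = h p' + k * (t - p') := by
      intro t; rw [hpe]; simp only [hL]; ring
    have hLr'' : h p' + k * (r' - p') = h r' := by rw [← hLt r', ← hre]
    have hp'pos := hpos p' hp'ab
    have hr'pos := hpos r' hr'ab
    have hLpos : ∀ t ∈ Icc p' r', 0 < L t := by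
      intro t ht
      rcases le_or_gt 0 k with hk0 | hk0
      · rw [hLt t]; nlinarith [ht.1]
      · have hge : L r' ≤ L t := by rw [hLt t, hLt r']; nlinarith [ht.2]
        rw [hLt r', hLr''] at hge; linarith
    have hIccp'r' : Icc p' r' ⊆ Icc a b := Icc_subset_Icc hp'ab.1 hr'ab.2
    have hint1 : IntervalIntegrable (fun t => (h t)⁻¹ ^ 2) MeasureTheory.volume p' r' := by
      apply ContinuousOn.intervalIntegrable
      rw [uIcc_of_le hp'r'.le]
      exact ((hcont.mono hIccp'r').inv₀ (fun t ht => (hpos t (hIccp'r' ht)).ne')).pow 2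
    have hint2 : IntervalIntegrable (fun t => (L t)⁻¹ ^ 2) MeasureTheory.volume p' r' := by
      apply ContinuousOn.intervalIntegrable
      rw [uIcc_of_le hp'r'.le]
      exact ((hLcont.continuousOn).inv₀ (fun t ht => (hLpos t ht).ne')).pow 2
    have hdiffpos : 0 < ∫ t in p'..r', ((L t)⁻¹ ^ 2 - (h t)⁻¹ ^ 2) := by
      apply intervalIntegral_pos_of_pos_on (hint2.sub hint1) _ hp'r'
      intro t ht
      have h1 := hLpos t ⟨ht.1.le, ht.2.le⟩
      have h2 := hstrict t ht
      have h3 : (h t)⁻¹ < (L t)⁻¹ := by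
        apply inv_strictAnti₀ h1 h2
      have h4 : (h t)⁻¹ ^ 2 < (L t)⁻¹ ^ 2 := by
        have h0 : (0:ℝ) ≤ (h t)⁻¹ := by
          have := h1.trans h2
          positivity
        apply pow_lt_pow_left₀ h3 h0 (by norm_num)
      linarith
    rw [intervalIntegral.integral_sub hint2 hint1] at hdiffpos
    have hLint : ∫ t in p'..r', (L t)⁻¹ ^ 2
        = (r' - p') / (h p' * (h p' + k * (r' - p'))) := by
      have he : ∀ t, (L t)⁻¹ ^ 2 = (h p' + k * (t - p'))⁻¹ ^ 2 := fun t => by rw [hLt t]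
      simp_rw [he]
      exact KoebeAux.integral_inv_sq_linear hp'r'.le hp'pos (by rw [hLr'']; exact hr'pos)
    rw [hLr''] at hLint
    have hGc := hG p' hp'ab r' hr'ab hp'r'.le
    linarith [hGc, hdiffpos, hLint.le, hLint.ge]
  -- assemble ConvexOn from core
  have aux : ∀ x ∈ Icc a b, ∀ y ∈ Icc a b, x < y → ∀ α β : ℝ, 0 ≤ α → 0 ≤ β →
      α + β = 1 → h (α * x + β * y) ≤ α * h x + β * h y := by
    intro x hx y hy hxy α β hα hβ hs
    rcases eq_or_lt_of_le hα with hα0 | hαpos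
    · have hβ1 : β = 1 := by linarith
      rw [← hα0, hβ1]; simp
    rcases eq_or_lt_of_le hβ with hβ0 | hβpos
    · have hα1 : α = 1 := by linarith
      rw [← hβ0, hα1]; simp
    have hαe : α = 1 - β := by linarith
    subst hαe
    have hq1 : x < (1 - β) * x + β * y := by nlinarith [mul_pos hβpos (sub_pos.mpr hxy)]
    have hq2 : (1 - β) * x + β * y < y := by nlinarith [mul_pos hβpos (sub_pos.mpr hxy), mul_pos hαpos (sub_pos.mpr hxy)]
    have hcore := core x hx y hy hxy ((1 - β) * x + β * y) ⟨hq1, hq2⟩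
    refine le_trans hcore (le_of_eq ?_)
    have hyx0 : y - x ≠ 0 := by intro hz; linarith [sub_pos.mpr hxy]
    field_simp
    ring
  refine ⟨convex_Icc a b, ?_⟩
  intro x hx y hy α β hα hβ hs
  simp only [smul_eq_mul]
  rcases lt_trichotomy x y with hxy | heq | hyx
  · exact aux x hx y hy hxy α β hα hβ hs
  · subst heq
    have h1 : α * x + β * x = x := by rw [← add_mul, hs, one_mul]
    have h2 : α * h x + β * h x = h x := by rw [← add_mul, hs, one_mul]
    rw [h1, h2]
  · have hmain := aux y hy x hx hyx β α hβ hα (by linarith)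
    calc h (α * x + β * y) = h (β * y + α * x) := by rw [add_comm]
      _ ≤ β * h y + α * h x := hmain
      _ = α * h x + β * h y := by ring

end KoebeAux2

open Set intervalIntegral

namespace KoebeAux3
open KoebeAux KoebeAux2

lemma koebe_side {h : ℝ → ℝ} {a c d b δ : ℝ} (hδ : 0 < δ)
    (hac : a ≤ c) (hcd : c ≤ d) (hdb : d ≤ b)
    (hconv : ConvexOn ℝ (Icc a b) h) (hcont : ContinuousOn h (Icc a b))
    (hpos : ∀ x ∈ Icc a b, 0 < h x)
    (hs2 : δ * ∫ t in c..d, (h t)⁻¹ ^ 2 ≤ ∫ t in d..b, (h t)⁻¹ ^ 2) :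
    ∀ s ∈ Icc c d, h d ≤ (1 + δ) / δ * h s := by
  intro s hs
  have hsab : s ∈ Icc a b := ⟨hac.trans hs.1, hs.2.trans hdb⟩
  have hdab : d ∈ Icc a b := ⟨hac.trans hcd, hdb⟩
  have hcab : c ∈ Icc a b := ⟨hac, hcd.trans hdb⟩
  have hbab : b ∈ Icc a b := ⟨hac.trans (hcd.trans hdb), le_rfl⟩
  have hspos := hpos s hsab
  have hdpos := hpos d hdab
  by_cases hds : h d ≤ h s
  · have hK : (1:ℝ) ≤ (1 + δ) / δ := by
      rw [le_div_iff₀ hδ]; linarith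
    nlinarith
  · push_neg at hds
    have hsd : s < d := by
      rcases eq_or_lt_of_le hs.2 with he | hlt
      · subst he; linarith
      · exact hlt
    have hds0 : (0:ℝ) < d - s := by linarith
    set k := (h d - h s) / (d - s) with hk
    have hkpos : 0 < k := div_pos (by linarith) hds0
    have hkds : h s + k * (d - s) = h d := by rw [hk]; field_simp; ring
    -- chord bound on [s,d]
    have hchord : ∀ t ∈ Icc s d, h t ≤ h s + k * (t - s) := by
      intro t ht
      have := convexOn_le_secant hconv hsab hdab hsd ht
      calc h t ≤ h s + (h d - h s) / (d - s) * (t - s) := this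
        _ = h s + k * (t - s) := by rw [hk]
    have hint_sd : (d - s) / (h s * (h s + k * (d - s))) ≤ ∫ t in s..d, (h t)⁻¹ ^ 2 := by
      apply integral_inv_sq_ge hsd.le hspos (by rw [hkds]; exact hdpos)
        (hcont.mono (Icc_subset_Icc hsab.1 hdab.2))
        (fun t ht => hpos t ⟨hsab.1.trans ht.1, ht.2.trans hdab.2⟩) hchord
    rw [hkds] at hint_sd
    -- beyond bound on [d,b]
    have hline : ∀ y ∈ Icc d b, h d + k * (y - d) ≤ h y := by
      intro y hy
      have := convexOn_beyond_secant hconv hsab (⟨hac.trans (hs.1.trans (hsd.le.trans hy.1)), hy.2⟩ : y ∈ Icc a b) hsd hy.1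
      calc h d + k * (y - d) = h s + (h d - h s) / (d - s) * (y - s) := by
            rw [← hk]; have : k * (y - s) = k * (y - d) + k * (d - s) := by ring
            rw [← hkds]; linarith [this]
        _ ≤ h y := this
    have hint_db : ∫ t in d..b, (h t)⁻¹ ^ 2 ≤ 1 / (k * h d) := by
      apply integral_inv_sq_le hdb hdpos hkpos
        (hcont.mono (Icc_subset_Icc hdab.1 le_rfl)) hline
    -- monotonicity of the middle integral
    have hint_cs : 0 ≤ ∫ t in c..s, (h t)⁻¹ ^ 2 := by
      apply intervalIntegral.integral_nonneg hs.1
      intro t _; positivity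
    have hsplit : ∫ t in c..d, (h t)⁻¹ ^ 2
        = (∫ t in c..s, (h t)⁻¹ ^ 2) + ∫ t in s..d, (h t)⁻¹ ^ 2 :=
      (intervalIntegral.integral_add_adjacent_intervals
        (intInt hcont hpos hs.1 hcab hsab) (intInt hcont hpos hsd.le hsab hdab)).symm
    have hchain : δ * ((d - s) / (h s * h d)) ≤ 1 / (k * h d) := by
      calc δ * ((d - s) / (h s * h d)) ≤ δ * ∫ t in s..d, (h t)⁻¹ ^ 2 := by
            apply mul_le_mul_of_nonneg_left hint_sd hδ.le
        _ ≤ δ * ∫ t in c..d, (h t)⁻¹ ^ 2 := by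
            apply mul_le_mul_of_nonneg_left _ hδ.le
            rw [hsplit]; linarith
        _ ≤ ∫ t in d..b, (h t)⁻¹ ^ 2 := hs2
        _ ≤ 1 / (k * h d) := hint_db
    -- conclude
    rw [← mul_div_assoc] at hchain
    rw [div_le_div_iff₀ (by positivity) (by positivity)] at hchain
    have hkd : k * (d - s) = h d - h s := by rw [hk]; field_simp
    have e : δ * (d - s) * (k * h d) = δ * (h d - h s) * h d := by
      rw [← hkd]; ring
    have key : δ * (h d - h s) * h d ≤ h s * h d := by linarith [hchain, e]
    have key2 : δ * (h d - h s) ≤ h s := by nlinarith [key, hdpos]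
    have e2 : (1 + δ) / δ * h s = (1 + δ) * h s / δ := by ring
    rw [e2, le_div_iff₀ hδ]
    nlinarith [key2]

lemma koebe_both {h : ℝ → ℝ} {a c d b δ : ℝ} (hδ : 0 < δ)
    (hac : a ≤ c) (hcd : c ≤ d) (hdb : d ≤ b)
    (hconv : ConvexOn ℝ (Icc a b) h) (hcont : ContinuousOn h (Icc a b))
    (hpos : ∀ x ∈ Icc a b, 0 < h x)
    (hs1 : δ * ∫ t in c..d, (h t)⁻¹ ^ 2 ≤ ∫ t in a..c, (h t)⁻¹ ^ 2)
    (hs2 : δ * ∫ t in c..d, (h t)⁻¹ ^ 2 ≤ ∫ t in d..b, (h t)⁻¹ ^ 2) :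
    ∀ s ∈ Icc c d, ∀ t ∈ Icc c d, h t ≤ (1 + δ) / δ * h s := by
  intro s hs t ht
  have hdK : h d ≤ (1 + δ) / δ * h s :=
    koebe_side hδ hac hcd hdb hconv hcont hpos hs2 s hs
  -- reflected data
  have hcK : h c ≤ (1 + δ) / δ * h s := by
    set g := fun x => h (a + b - x) with hg
    have hgconv : ConvexOn ℝ (Icc a b) g := convexOn_reflect hconv
    have hmapsTo : ∀ x ∈ Icc a b, a + b - x ∈ Icc a b := fun x hx =>
      ⟨by linarith [hx.2], by linarith [hx.1]⟩
    have hgcont : ContinuousOn g (Icc a b) := by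
      apply hcont.comp (Continuous.continuousOn (by fun_prop)) hmapsTo
    have hgpos : ∀ x ∈ Icc a b, 0 < g x := fun x hx => hpos _ (hmapsTo x hx)
    have hrefl1 : ∫ u in (a + b - d)..(a + b - c), (g u)⁻¹ ^ 2
        = ∫ u in c..d, (h u)⁻¹ ^ 2 := by
      have := intervalIntegral.integral_comp_sub_left
        (a := a + b - d) (b := a + b - c) (fun u => (h u)⁻¹ ^ 2) (a + b)
      simp only [hg]
      rw [this]
      norm_num
    have hrefl2 : ∫ u in (a + b - c)..b, (g u)⁻¹ ^ 2
        = ∫ u in a..c, (h u)⁻¹ ^ 2 := by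
      have := intervalIntegral.integral_comp_sub_left
        (a := a + b - c) (b := b) (fun u => (h u)⁻¹ ^ 2) (a + b)
      simp only [hg]
      rw [this]
      norm_num
    have := koebe_side (h := g) (a := a) (c := a + b - d) (d := a + b - c) (b := b)
      hδ (by linarith) (by linarith) (by linarith) hgconv hgcont hgpos
      (by rw [hrefl1, hrefl2]; exact hs1) (a + b - s)
      ⟨by linarith [hs.2], by linarith [hs.1]⟩
    simpa [hg] using this
  -- combine via convexity on [c,d]
  rcases eq_or_lt_of_le hcd with he | hcd'
  · subst he
    have : t = c := le_antisymm ht.2 ht.1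
    rw [this]; exact hcK
  · have hcab : c ∈ Icc a b := ⟨hac, hcd.trans hdb⟩
    have hdab : d ∈ Icc a b := ⟨hac.trans hcd, hdb⟩
    have := convexOn_le_secant hconv hcab hdab hcd' ht
    rcases le_total (h c) (h d) with hcd2 | hcd2
    · have : h t ≤ h d := by
        have h2 : (h d - h c) / (d - c) * (t - c) ≤ (h d - h c) / (d - c) * (d - c) := by
          apply mul_le_mul_of_nonneg_left (by linarith [ht.2])
            (div_nonneg (by linarith) (by linarith))
        have h3 : (h d - h c) / (d - c) * (d - c) = h d - h c :=
          div_mul_cancel₀ _ (sub_pos.mpr hcd').ne'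
        linarith
      linarith
    · have : h t ≤ h c := by
        have h2 : (h d - h c) / (d - c) * (t - c) ≤ 0 := by
          apply mul_nonpos_of_nonpos_of_nonneg
          · apply div_nonpos_of_nonpos_of_nonneg (by linarith) (by linarith)
          · linarith [ht.1]
        linarith
      linarith

end KoebeAux3

open Set intervalIntegral Filter Topology

namespace KoebeAux4
open KoebeAux KoebeAux2 KoebeAux3

lemma sign_const {F' : ℝ → ℝ} {a b : ℝ} (hcont : ContinuousOn F' (Icc a b))
    (hne : ∀ z ∈ Icc a b, F' z ≠ 0) :
    (∀ z ∈ Icc a b, 0 < F' z) ∨ (∀ z ∈ Icc a b, F' z < 0) := by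
  by_contra hc
  push_neg at hc
  obtain ⟨⟨z1, hz1, hz1'⟩, ⟨z2, hz2, hz2'⟩⟩ := hc
  have h1' : F' z1 < 0 := lt_of_le_of_ne hz1' (hne z1 hz1)
  have h2' : 0 < F' z2 := lt_of_le_of_ne hz2' ((hne z2 hz2).symm)
  have hsub : uIcc z1 z2 ⊆ Icc a b := uIcc_subset_Icc hz1 hz2
  have hIV := intermediate_value_uIcc (hcont.mono hsub)
  have h0 : (0:ℝ) ∈ uIcc (F' z1) (F' z2) := by
    rw [mem_uIcc]; left; exact ⟨h1'.le, h2'.le⟩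
  obtain ⟨z, hz, hz0⟩ := hIV h0
  exact hne z (hsub hz) hz0

lemma abs_sub_eq_integral {F F' : ℝ → ℝ} {a b x y : ℝ} (hxy : x ≤ y)
    (hx : x ∈ Icc a b) (hy : y ∈ Icc a b)
    (hF : ∀ z ∈ Icc a b, HasDerivAt F (F' z) z) (hcont : ContinuousOn F' (Icc a b))
    (hne : ∀ z ∈ Icc a b, F' z ≠ 0) :
    |F y - F x| = ∫ t in x..y, |F' t| := by
  have hsub : Icc x y ⊆ Icc a b := Icc_subset_Icc hx.1 hy.2
  have hintF' : IntervalIntegrable F' MeasureTheory.volume x y := by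
    apply ContinuousOn.intervalIntegrable
    rw [uIcc_of_le hxy]; exact hcont.mono hsub
  have hFTC : F y - F x = ∫ t in x..y, F' t := by
    symm
    apply integral_eq_sub_of_hasDerivAt _ hintF'
    intro t ht; rw [uIcc_of_le hxy] at ht; exact hF t (hsub ht)
  rcases sign_const hcont hne with hps | hng
  · rw [hFTC,
      abs_of_nonneg (intervalIntegral.integral_nonneg hxy fun t ht => (hps t (hsub ht)).le)]
    apply intervalIntegral.integral_congr
    intro t ht; rw [uIcc_of_le hxy] at ht
    exact (abs_of_pos (hps t (hsub ht))).symm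
  · have hnn : 0 ≤ ∫ t in x..y, -F' t :=
      intervalIntegral.integral_nonneg hxy fun t ht => neg_nonneg.mpr (hng t (hsub ht)).le
    rw [intervalIntegral.integral_neg] at hnn
    rw [hFTC, abs_of_nonpos (by linarith), ← intervalIntegral.integral_neg]
    apply intervalIntegral.integral_congr
    intro t ht; rw [uIcc_of_le hxy] at ht
    exact (abs_of_neg (hng t (hsub ht))).symm

section T

variable {T : ℝ → ℝ} (hmaps : MapsTo T (Icc (0:ℝ) 1) (Icc (0:ℝ) 1))
  (hC2 : ContDiffOn ℝ 2 T (Icc (0:ℝ) 1))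

include hmaps hC2 in
lemma iter_contDiffOn (n : ℕ) : ContDiffOn ℝ 2 (T^[n]) (Icc (0:ℝ) 1) := by
  induction n with
  | zero =>
    simp only [Function.iterate_zero]
    exact contDiffOn_id
  | succ k ih =>
    rw [Function.iterate_succ']
    exact hC2.comp ih (hmaps.iterate k)

include hmaps hC2 in
lemma iter_lip (n : ℕ) : ∃ C : ℝ, 0 ≤ C ∧ ∀ u ∈ Icc (0:ℝ) 1, ∀ v ∈ Icc (0:ℝ) 1,
    |T^[n] u - T^[n] v| ≤ C * |u - v| := by
  have hcd := iter_contDiffOn hmaps hC2 n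
  have hdiff : DifferentiableOn ℝ (T^[n]) (Icc (0:ℝ) 1) := hcd.differentiableOn (by norm_num)
  have hdc : ContinuousOn (derivWithin (T^[n]) (Icc (0:ℝ) 1)) (Icc (0:ℝ) 1) :=
    hcd.continuousOn_derivWithin (uniqueDiffOn_Icc one_pos) (by norm_num)
  obtain ⟨C, hC⟩ := isCompact_Icc.exists_bound_of_continuousOn hdc
  refine ⟨max C 0, le_max_right _ _, fun u hu v hv => ?_⟩
  have := Convex.norm_image_sub_le_of_norm_derivWithin_le (C := max C 0) hdiff
      (fun z hz => le_trans (hC z hz) (le_max_left C 0)) (convex_Icc 0 1) hv hu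
  simpa [Real.norm_eq_abs] using this

include hmaps hC2 in
lemma orbit_ne {n : ℕ} {a b : ℝ} (hab : a < b) (h0a : 0 ≤ a) (hb1 : b ≤ 1)
    (hder : ∀ x ∈ Icc a b, deriv (T^[n]) x ≠ 0)
    {z : ℝ} (hz : z ∈ Icc a b) {i : ℕ} (hi : i < n)
    (hw : T^[i] z ∈ Ioo (0:ℝ) 1) : deriv T (T^[i] z) ≠ 0 := by
  intro h0
  have hIccsub : Icc a b ⊆ Icc (0:ℝ) 1 := Icc_subset_Icc h0a hb1
  have hdiffT : DifferentiableAt ℝ T (T^[i] z) :=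
    (hC2.differentiableOn (by norm_num)).differentiableAt (Icc_mem_nhds hw.1 hw.2)
  have hT0 : HasDerivAt T 0 (T^[i] z) := h0 ▸ hdiffT.hasDerivAt
  obtain ⟨CA, _, hCA⟩ := iter_lip hmaps hC2 (n - i - 1)
  obtain ⟨CB, _, hCB⟩ := iter_lip hmaps hC2 i
  have hfun : ∀ x, T^[n] x = T^[n - i - 1] (T (T^[i] x)) := by
    intro x
    have h1 : n = (n - i - 1) + (1 + i) := by omega
    conv_lhs => rw [h1]
    rw [Function.iterate_add_apply, Function.iterate_add_apply, Function.iterate_one]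
  have htendB : Tendsto (T^[i]) (𝓝[Icc a b] z) (𝓝 (T^[i] z)) := by
    have hcB : ContinuousOn (T^[i]) (Icc (0:ℝ) 1) := (iter_contDiffOn hmaps hC2 i).continuousOn
    exact (hcB z (hIccsub hz)).mono hIccsub
  have h1 : (fun u => T u - T (T^[i] z)) =o[𝓝 (T^[i] z)] (fun u => u - T^[i] z) := by
    simpa using hasDerivAt_iff_isLittleO.mp hT0
  have h3 : (fun x => T (T^[i] x) - T (T^[i] z)) =o[𝓝[Icc a b] z]
      (fun x => T^[i] x - T^[i] z) := h1.comp_tendsto htendB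
  have h4 : (fun x => T^[i] x - T^[i] z) =O[𝓝[Icc a b] z] (fun x => x - z) := by
    apply Asymptotics.isBigO_iff.mpr
    refine ⟨CB, ?_⟩
    filter_upwards [eventually_mem_nhdsWithin] with x hx
    simpa [Real.norm_eq_abs] using hCB x (hIccsub hx) z (hIccsub hz)
  have h5 : (fun x => T^[n] x - T^[n] z) =O[𝓝[Icc a b] z]
      (fun x => T (T^[i] x) - T (T^[i] z)) := by
    apply Asymptotics.isBigO_iff.mpr
    refine ⟨CA, ?_⟩
    filter_upwards [eventually_mem_nhdsWithin] with x hx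
    have hm1 : T (T^[i] x) ∈ Icc (0:ℝ) 1 := hmaps ((hmaps.iterate i) (hIccsub hx))
    have hm2 : T (T^[i] z) ∈ Icc (0:ℝ) 1 := hmaps ((hmaps.iterate i) (hIccsub hz))
    rw [hfun x, hfun z]
    simpa [Real.norm_eq_abs] using hCA _ hm1 _ hm2
  have hlito : (fun x => T^[n] x - T^[n] z) =o[𝓝[Icc a b] z] (fun x => x - z) :=
    h5.trans_isLittleO (h3.trans_isBigO h4)
  have hDW0 : HasDerivWithinAt (T^[n]) 0 (Icc a b) z := by
    rw [hasDerivWithinAt_iff_isLittleO]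
    simpa using hlito
  have hda : DifferentiableAt ℝ (T^[n]) z := by
    by_contra hnd
    exact hder z hz (deriv_zero_of_not_differentiableAt hnd)
  have hDW : HasDerivWithinAt (T^[n]) (deriv (T^[n]) z) (Icc a b) z :=
    hda.hasDerivAt.hasDerivWithinAt
  have hu : UniqueDiffWithinAt ℝ (Icc a b) z := uniqueDiffOn_Icc hab z hz
  exact hder z hz (by rw [← hDW.derivWithin hu, hDW0.derivWithin hu])

include hmaps hC2 in
lemma chain_at_good {n : ℕ} {x : ℝ} (hgood : ∀ i < n, T^[i] x ∈ Ioo (0:ℝ) 1) :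
    ∀ k, k ≤ n → HasDerivAt (T^[k]) (∏ i ∈ Finset.range k, deriv T (T^[i] x)) x := by
  intro k
  induction k with
  | zero =>
    intro _
    simp only [Function.iterate_zero, Finset.prod_range_zero]
    exact hasDerivAt_id x
  | succ k ih =>
    intro hk1
    have hk : k ≤ n := by omega
    have hkn : k < n := by omega
    have hw := hgood k hkn
    have hdT : DifferentiableAt ℝ T (T^[k] x) :=
      (hC2.differentiableOn (by norm_num)).differentiableAt (Icc_mem_nhds hw.1 hw.2)
    have hcomp := hdT.hasDerivAt.comp x (ih hk)
    rw [Function.iterate_succ']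
    rw [Finset.prod_range_succ, mul_comm]; exact hcomp

end T

end KoebeAux4

open Set intervalIntegral Filter Topology

namespace KoebeAux5
open KoebeAux KoebeAux2 KoebeAux3 KoebeAux4

variable {T : ℝ → ℝ} (hmaps : MapsTo T (Icc (0:ℝ) 1) (Icc (0:ℝ) 1))
  (hC2 : ContDiffOn ℝ 2 T (Icc (0:ℝ) 1))
  (hSchw : ∀ p q : ℝ, 0 ≤ p → p ≤ q → q ≤ 1 →
      (∀ x ∈ Icc p q, deriv T x ≠ 0) →
      ConvexOn ℝ (Icc p q) (fun x => 1 / Real.sqrt |deriv T x|))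

include hmaps hC2 hSchw in
lemma G_of_T {p q : ℝ} (h0p : 0 < p) (hq1 : q < 1) (hpq : p ≤ q)
    (hnz : ∀ x ∈ Icc p q, deriv T x ≠ 0) {u v : ℝ} (hu : u ∈ Icc p q) (hv : v ∈ Icc p q)
    (huv : u ≤ v) :
    (v - u) * Real.sqrt (|deriv T u| * |deriv T v|) ≤ |T v - T u| := by
  have hconv := hSchw p q h0p.le hpq hq1.le hnz
  have hsubI : Icc p q ⊆ Ioo (0:ℝ) 1 := fun t ht =>
    ⟨h0p.trans_le ht.1, lt_of_le_of_lt ht.2 hq1⟩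
  have hderivCont : ContinuousOn (deriv T) (Icc p q) := by
    have h1 : ContDiffOn ℝ 2 T (Ioo (0:ℝ) 1) := hC2.mono Ioo_subset_Icc_self
    exact (h1.continuousOn_deriv_of_isOpen isOpen_Ioo (by norm_num)).mono hsubI
  have hhas : ∀ z ∈ Icc p q, HasDerivAt T (deriv T z) z := fun z hz =>
    ((hC2.differentiableOn (by norm_num)).differentiableAt
      (Icc_mem_nhds (hsubI hz).1 (hsubI hz).2)).hasDerivAt
  have habs := abs_sub_eq_integral huv hu hv hhas hderivCont hnz
  set H := fun t => 1 / Real.sqrt |deriv T t| with hH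
  have hHpos : ∀ t ∈ Icc p q, 0 < H t := fun t ht => hval_pos (hnz t ht)
  have hHe : ∀ t ∈ Icc p q, |deriv T t| = (H t)⁻¹ ^ 2 := by
    intro t ht
    simp only [hH, one_div, inv_inv]
    rw [Real.sq_sqrt (abs_nonneg _)]
  have hsubuv : Icc u v ⊆ Icc p q := Icc_subset_Icc hu.1 hv.2
  have hint : ∫ t in u..v, |deriv T t| = ∫ t in u..v, (H t)⁻¹ ^ 2 := by
    apply integral_congr
    intro t ht; rw [uIcc_of_le huv] at ht
    exact hHe t (hsubuv ht)
  have hHcont : ContinuousOn H (Icc p q) := by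
    rw [hH]
    apply ContinuousOn.div continuousOn_const
    · exact Real.continuous_sqrt.comp_continuousOn hderivCont.abs
    · intro t ht
      have : 0 < |deriv T t| := abs_pos.mpr (hnz t ht)
      positivity
  rcases eq_or_lt_of_le huv with rfl | huv'
  · simp
  have hchord : ∀ t ∈ Icc u v, H t ≤ H u + (H v - H u) / (v - u) * (t - u) :=
    fun t ht => convexOn_le_secant hconv hu hv huv' ht
  have hBv : H u + (H v - H u) / (v - u) * (v - u) = H v := by
    have hne : v - u ≠ 0 := by linarith
    field_simp
    ring
  have hkey := integral_inv_sq_ge huv'.le (hHpos u hu) (by rw [hBv]; exact hHpos v hv)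
    (hHcont.mono hsubuv) (fun t ht => hHpos t (hsubuv ht)) hchord
  rw [hBv] at hkey
  have hsu : 0 < Real.sqrt |deriv T u| := by
    have : 0 < |deriv T u| := abs_pos.mpr (hnz u hu); positivity
  have hsv : 0 < Real.sqrt |deriv T v| := by
    have : 0 < |deriv T v| := abs_pos.mpr (hnz v hv); positivity
  have hfin : (v - u) / (H u * H v)
      = (v - u) * Real.sqrt (|deriv T u| * |deriv T v|) := by
    simp only [hH, one_div]
    rw [Real.sqrt_mul (abs_nonneg _), ← mul_inv, div_eq_mul_inv, inv_inv]
  rw [habs, hint]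
  calc (v - u) * Real.sqrt (|deriv T u| * |deriv T v|)
      = (v - u) / (H u * H v) := hfin.symm
    _ ≤ _ := hkey

include hmaps hC2 hSchw in
lemma G_iter {n : ℕ} {a b : ℝ} (hab : a < b) (h0a : 0 ≤ a) (hb1 : b ≤ 1)
    (hinj : InjOn (T^[n]) (Icc a b))
    (hder : ∀ x ∈ Icc a b, deriv (T^[n]) x ≠ 0)
    {x y : ℝ} (hx : x ∈ Icc a b) (hy : y ∈ Icc a b) (hxy : x ≤ y)
    (hgx : ∀ i < n, T^[i] x ∈ Ioo (0:ℝ) 1) (hgy : ∀ i < n, T^[i] y ∈ Ioo (0:ℝ) 1) :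
    (y - x) * Real.sqrt (|deriv (T^[n]) x| * |deriv (T^[n]) y|) ≤ |T^[n] y - T^[n] x| := by
  rcases eq_or_lt_of_le hxy with rfl | hxy'
  · simp
  have hIccsub : Icc a b ⊆ Icc (0:ℝ) 1 := Icc_subset_Icc h0a hb1
  have hinj_it : ∀ i ≤ n, InjOn (T^[i]) (Icc a b) := by
    intro i hi u hu v hv he
    apply hinj hu hv
    have h1 : n = (n - i) + i := by omega
    conv_lhs => rw [h1]
    conv_rhs => rw [h1]
    rw [Function.iterate_add_apply, Function.iterate_add_apply, he]
  have main : ∀ k, k ≤ n →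
      (y - x) * Real.sqrt ((∏ j ∈ Finset.range k, |deriv T (T^[j] x)|)
        * ∏ j ∈ Finset.range k, |deriv T (T^[j] y)|) ≤ |T^[k] y - T^[k] x| := by
    intro k
    induction k with
    | zero =>
      intro _
      simp only [Finset.prod_range_zero, mul_one, Real.sqrt_one, Function.iterate_zero, id]
      exact le_abs_self (y - x)
    | succ k ih =>
      intro hk1
      have hk : k ≤ n := by omega
      have hkn : k < n := by omega
      have hu := hgx k hkn
      have hv := hgy k hkn
      have hpIoo : min (T^[k] x) (T^[k] y) ∈ Ioo (0:ℝ) 1 :=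
        ⟨lt_min hu.1 hv.1, (min_le_left _ _).trans_lt hu.2⟩
      have hqIoo : max (T^[k] x) (T^[k] y) ∈ Ioo (0:ℝ) 1 :=
        ⟨hu.1.trans_le (le_max_left _ _), max_lt hu.2 hv.2⟩
      have hpq : min (T^[k] x) (T^[k] y) ≤ max (T^[k] x) (T^[k] y) := min_le_max
      have huIcc : uIcc (T^[k] x) (T^[k] y)
          = Icc (min (T^[k] x) (T^[k] y)) (max (T^[k] x) (T^[k] y)) := by
        rw [uIcc]
      have hsurj : Icc (min (T^[k] x) (T^[k] y)) (max (T^[k] x) (T^[k] y))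
          ⊆ T^[k] '' (Icc x y) := by
        have hcont : ContinuousOn (T^[k]) (uIcc x y) := by
          apply ((iter_contDiffOn hmaps hC2 k).continuousOn).mono
          rw [uIcc_of_le hxy]
          exact (Icc_subset_Icc hx.1 hy.2).trans hIccsub
        have := intermediate_value_uIcc hcont
        rw [huIcc, uIcc_of_le hxy] at this
        exact this
      have hnz : ∀ w ∈ Icc (min (T^[k] x) (T^[k] y)) (max (T^[k] x) (T^[k] y)),
          deriv T w ≠ 0 := by
        intro w hw
        obtain ⟨z, hzxy, hzw⟩ := hsurj hw
        have hzab : z ∈ Icc a b := ⟨hx.1.trans hzxy.1, hzxy.2.trans hy.2⟩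
        have hwIoo : T^[k] z ∈ Ioo (0:ℝ) 1 := by
          rw [hzw]
          exact ⟨hpIoo.1.trans_le hw.1, lt_of_le_of_lt hw.2 hqIoo.2⟩
        have := orbit_ne hmaps hC2 hab h0a hb1 hder hzab hkn hwIoo
        rwa [hzw] at this
      have hGT := G_of_T hmaps hC2 hSchw hpIoo.1 hqIoo.2 hpq hnz
        (left_mem_Icc.mpr hpq) (right_mem_Icc.mpr hpq) hpq
      -- reorient
      have hstep : |T^[k] y - T^[k] x|
          * Real.sqrt (|deriv T (T^[k] x)| * |deriv T (T^[k] y)|)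
          ≤ |T^[k+1] y - T^[k+1] x| := by
        rw [Function.iterate_succ_apply' T k y, Function.iterate_succ_apply' T k x]
        rcases le_total (T^[k] x) (T^[k] y) with h | h
        · rw [min_eq_left h, max_eq_right h] at hGT
          calc |T^[k] y - T^[k] x| * Real.sqrt (|deriv T (T^[k] x)| * |deriv T (T^[k] y)|)
              = (T^[k] y - T^[k] x)
                * Real.sqrt (|deriv T (T^[k] x)| * |deriv T (T^[k] y)|) := by
                rw [abs_of_nonneg (by linarith)]
            _ ≤ |T (T^[k] y) - T (T^[k] x)| := hGT
        · rw [min_eq_right h, max_eq_left h] at hGT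
          calc |T^[k] y - T^[k] x| * Real.sqrt (|deriv T (T^[k] x)| * |deriv T (T^[k] y)|)
              = (T^[k] x - T^[k] y)
                * Real.sqrt (|deriv T (T^[k] y)| * |deriv T (T^[k] x)|) := by
                rw [abs_of_nonpos (by linarith), mul_comm (|deriv T (T^[k] y)|)]
                ring
            _ ≤ |T (T^[k] x) - T (T^[k] y)| := hGT
            _ = |T (T^[k] y) - T (T^[k] x)| := abs_sub_comm _ _
      have hsqrt_nonneg : 0 ≤ Real.sqrt (|deriv T (T^[k] x)| * |deriv T (T^[k] y)|) :=
        Real.sqrt_nonneg _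
      have hih := ih hk
      have hmul := mul_le_mul_of_nonneg_right hih hsqrt_nonneg
      have hcomb : (y - x) * Real.sqrt ((∏ j ∈ Finset.range (k+1), |deriv T (T^[j] x)|)
          * ∏ j ∈ Finset.range (k+1), |deriv T (T^[j] y)|)
          ≤ |T^[k] y - T^[k] x|
            * Real.sqrt (|deriv T (T^[k] x)| * |deriv T (T^[k] y)|) := by
        have hPnn : ∀ z : ℝ, 0 ≤ ∏ j ∈ Finset.range k, |deriv T (T^[j] z)| :=
          fun z => Finset.prod_nonneg fun j _ => abs_nonneg _
        have hre : (∏ j ∈ Finset.range (k+1), |deriv T (T^[j] x)|)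
            * ∏ j ∈ Finset.range (k+1), |deriv T (T^[j] y)|
            = ((∏ j ∈ Finset.range k, |deriv T (T^[j] x)|)
              * ∏ j ∈ Finset.range k, |deriv T (T^[j] y)|)
              * (|deriv T (T^[k] x)| * |deriv T (T^[k] y)|) := by
          rw [Finset.prod_range_succ, Finset.prod_range_succ]; ring
        rw [hre, Real.sqrt_mul (by positivity)]
        calc (y - x) * (Real.sqrt ((∏ j ∈ Finset.range k, |deriv T (T^[j] x)|)
              * ∏ j ∈ Finset.range k, |deriv T (T^[j] y)|)
              * Real.sqrt (|deriv T (T^[k] x)| * |deriv T (T^[k] y)|))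
            = ((y - x) * Real.sqrt ((∏ j ∈ Finset.range k, |deriv T (T^[j] x)|)
              * ∏ j ∈ Finset.range k, |deriv T (T^[j] y)|))
              * Real.sqrt (|deriv T (T^[k] x)| * |deriv T (T^[k] y)|) := by ring
          _ ≤ _ := hmul
      exact le_trans hcomb hstep
  have hfin := main n le_rfl
  have hdx : deriv (T^[n]) x = ∏ j ∈ Finset.range n, deriv T (T^[j] x) :=
    (chain_at_good hmaps hC2 hgx n le_rfl).deriv
  have hdy : deriv (T^[n]) y = ∏ j ∈ Finset.range n, deriv T (T^[j] y) :=
    (chain_at_good hmaps hC2 hgy n le_rfl).deriv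
  rw [hdx, hdy, Finset.abs_prod, Finset.abs_prod]
  exact hfin

end KoebeAux5


open KoebeAux KoebeAux2 KoebeAux3 KoebeAux4 KoebeAux5 in
/-- Koebe Principle. Let `T : [0,1] → [0,1]` be `C²` with non-positive
Schwarzian derivative (`1/√|T'|` locally convex where `T' ≠ 0`). If `Tⁿ` is a `C²`
diffeomorphism on `W' = [a,b] ⊇ W = [c,d]` and `Tⁿ(W')` contains a `δ`-scaled
neighborhood of `Tⁿ(W)`, then the distortion of `Tⁿ` on `W` is at most `((1+δ)/δ)²`. -/
theorem stmt12 (T : ℝ → ℝ) (hmaps : MapsTo T (Icc (0:ℝ) 1) (Icc (0:ℝ) 1))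
    (hC2 : ContDiffOn ℝ 2 T (Icc (0:ℝ) 1))
    (hSchw : ∀ p q : ℝ, 0 ≤ p → p ≤ q → q ≤ 1 →
      (∀ x ∈ Icc p q, deriv T x ≠ 0) →
      ConvexOn ℝ (Icc p q) (fun x => 1 / Real.sqrt |deriv T x|))
    (n : ℕ) (hn : 1 ≤ n) (a c d b δ : ℝ) (hδ : 0 < δ)
    (h0a : 0 ≤ a) (hac : a ≤ c) (hcd : c ≤ d) (hdb : d ≤ b) (hb1 : b ≤ 1)
    (hinj : InjOn (T^[n]) (Icc a b))
    (hder : ∀ x ∈ Icc a b, deriv (T^[n]) x ≠ 0)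
    (hscale1 : δ * |T^[n] d - T^[n] c| ≤ |T^[n] c - T^[n] a|)
    (hscale2 : δ * |T^[n] d - T^[n] c| ≤ |T^[n] b - T^[n] d|) :
    ∀ s ∈ Icc c d, ∀ t ∈ Icc c d,
      |deriv (T^[n]) s| ≤ ((1 + δ) / δ) ^ 2 * |deriv (T^[n]) t| := by
  
  intro s hs t ht
  have hK1 : (1:ℝ) ≤ (1 + δ) / δ := by rw [le_div_iff₀ hδ]; linarith
  have hK2 : (1:ℝ) ≤ ((1 + δ) / δ) ^ 2 := by nlinarith
  rcases eq_or_lt_of_le (hac.trans (hcd.trans hdb)) with hab | hab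
  · -- degenerate: a = b, so s = t
    have hcde : c = d := le_antisymm hcd (by linarith [hac, hdb])
    have hst : s = t := by
      have h1 := hs.1; have h2 := hs.2; have h3 := ht.1; have h4 := ht.2
      rw [hcde] at h1; rw [← hcde] at h4
      have : s = c := le_antisymm (hs.2.trans hcde.ge) hs.1
      have ht' : t = c := le_antisymm (ht.2.trans hcde.ge) ht.1
      rw [this, ht']
    rw [hst]
    nlinarith [abs_nonneg (deriv (T^[n]) t)]
  · -- main case a < b
    have hIccsub : Icc a b ⊆ Icc (0:ℝ) 1 := Icc_subset_Icc h0a hb1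
    have haab : a ∈ Icc a b := left_mem_Icc.mpr hab.le
    have hbab : b ∈ Icc a b := right_mem_Icc.mpr hab.le
    have hcab : c ∈ Icc a b := ⟨hac, hcd.trans hdb⟩
    have hdab : d ∈ Icc a b := ⟨hac.trans hcd, hdb⟩
    have hsab : s ∈ Icc a b := ⟨hac.trans hs.1, hs.2.trans hdb⟩
    have htab : t ∈ Icc a b := ⟨hac.trans ht.1, ht.2.trans hdb⟩
    have hdFa : ∀ z ∈ Icc a b, DifferentiableAt ℝ (T^[n]) z := by
      intro z hz
      by_contra hnd
      exact hder z hz (deriv_zero_of_not_differentiableAt hnd)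
    have hFhas : ∀ z ∈ Icc a b, HasDerivAt (T^[n]) (deriv (T^[n]) z) z :=
      fun z hz => (hdFa z hz).hasDerivAt
    have hFderivCont : ContinuousOn (deriv (T^[n])) (Icc a b) := by
      have hFC2 := iter_contDiffOn hmaps hC2 n
      have hdw : ContinuousOn (derivWithin (T^[n]) (Icc (0:ℝ) 1)) (Icc (0:ℝ) 1) :=
        hFC2.continuousOn_derivWithin (uniqueDiffOn_Icc one_pos) (by norm_num)
      apply ContinuousOn.congr (hdw.mono hIccsub)
      intro z hz
      exact ((hFhas z hz).hasDerivWithinAt.derivWithin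
        (uniqueDiffOn_Icc one_pos z (hIccsub hz))).symm
    set h : ℝ → ℝ := fun z => 1 / Real.sqrt |deriv (T^[n]) z| with hh
    have hhpos : ∀ z ∈ Icc a b, 0 < h z := fun z hz => hval_pos (hder z hz)
    have hhcont : ContinuousOn h (Icc a b) := by
      rw [hh]
      apply ContinuousOn.div continuousOn_const
      · exact Real.continuous_sqrt.comp_continuousOn hFderivCont.abs
      · intro z hz
        have : 0 < |deriv (T^[n]) z| := abs_pos.mpr (hder z hz)
        positivity
    have hhinv : ∀ z ∈ Icc a b, |deriv (T^[n]) z| = (h z)⁻¹ ^ 2 := by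
      intro z hz
      simp only [hh, one_div, inv_inv]
      rw [Real.sq_sqrt (abs_nonneg _)]
    -- the good set
    set S : Set ℝ := {z | z ∈ Icc a b ∧ ∀ i < n, T^[i] z ∈ Ioo (0:ℝ) 1} with hS
    have hinj_it : ∀ i ≤ n, InjOn (T^[i]) (Icc a b) := by
      intro i hi u hu v hv he
      apply hinj hu hv
      have h1 : n = (n - i) + i := by omega
      conv_lhs => rw [h1]
      conv_rhs => rw [h1]
      rw [Function.iterate_add_apply, Function.iterate_add_apply, he]
    have hBadfin : (Icc a b \ S).Finite := by
      have hsub2 : Icc a b \ S ⊆ ⋃ i ∈ Finset.range n,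
          {z | z ∈ Icc a b ∧ (T^[i] z = 0 ∨ T^[i] z = 1)} := by
        rintro z ⟨hz, hzS⟩
        have : ¬ (∀ i < n, T^[i] z ∈ Ioo (0:ℝ) 1) := fun hA => hzS ⟨hz, hA⟩
        push_neg at this
        obtain ⟨i, hi, hnIoo⟩ := this
        have hmem01 : T^[i] z ∈ Icc (0:ℝ) 1 := (hmaps.iterate i) (hIccsub hz)
        have h01 : T^[i] z = 0 ∨ T^[i] z = 1 := by
          by_contra hno
          push_neg at hno
          exact hnIoo ⟨lt_of_le_of_ne hmem01.1 (Ne.symm hno.1),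
            lt_of_le_of_ne hmem01.2 hno.2⟩
        exact mem_iUnion₂.mpr ⟨i, Finset.mem_range.mpr hi, ⟨hz, h01⟩⟩
      apply Set.Finite.subset _ hsub2
      apply Set.Finite.biUnion (Finset.range n).finite_toSet
      intro i hi
      apply Set.Finite.of_finite_image (f := T^[i])
      · apply Set.Finite.subset ((Set.finite_singleton (0:ℝ)).insert 0 |>.union (Set.finite_singleton 1))
        rintro w ⟨z, ⟨_, hz2⟩, rfl⟩
        rcases hz2 with hz2 | hz2 <;> rw [hz2] <;> simp
      · exact (hinj_it i (le_of_lt (Finset.mem_range.mp hi))).mono (fun z hz => hz.1)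
    have hdense : ∀ z ∈ Icc a b, ∀ ε > 0, ∃ w, w ∈ S ∧ |w - z| < ε := by
      intro z hz ε hε
      have hlr : max a (z - ε/2) < min b (z + ε/2) := by
        simp only [lt_min_iff, max_lt_iff]
        exact ⟨⟨hab, by linarith [hz.2]⟩, by linarith [hz.1], by linarith⟩
      have hIccLR : Icc (max a (z - ε/2)) (min b (z + ε/2)) ⊆ Icc a b :=
        Icc_subset_Icc (le_max_left _ _) (min_le_left _ _)
      have hinf : (Icc (max a (z - ε/2)) (min b (z + ε/2))).Infinite := Set.Icc_infinite hlr
      obtain ⟨w, hw⟩ := (hinf.diff hBadfin).nonempty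
      refine ⟨w, ?_, ?_⟩
      · have hwab : w ∈ Icc a b := hIccLR hw.1
        by_contra hwS
        exact hw.2 ⟨hwab, hwS⟩
      · have h1 : z - ε/2 ≤ w := le_trans (le_max_right _ _) hw.1.1
        have h2 : w ≤ z + ε/2 := le_trans hw.1.2 (min_le_right _ _)
        rw [abs_lt]; constructor <;> linarith
    -- basic integral facts
    have habs_int : ∀ x ∈ Icc a b, ∀ y ∈ Icc a b, x ≤ y →
        |T^[n] y - T^[n] x| = ∫ u in x..y, (h u)⁻¹ ^ 2 := by
      intro x hx y hy hxy
      rw [abs_sub_eq_integral hxy hx hy hFhas hFderivCont hder]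
      apply integral_congr
      intro u hu; rw [uIcc_of_le hxy] at hu
      exact hhinv u (Icc_subset_Icc hx.1 hy.2 hu)
    have hGform : ∀ x ∈ Icc a b, ∀ y ∈ Icc a b, x ≤ y →
        (y - x) * Real.sqrt (|deriv (T^[n]) x| * |deriv (T^[n]) y|) ≤ |T^[n] y - T^[n] x| →
        (y - x) / (h x * h y) ≤ ∫ u in x..y, (h u)⁻¹ ^ 2 := by
      intro x hx y hy hxy hG
      rw [← habs_int x hx y hy hxy]
      calc (y - x) / (h x * h y)
          = (y - x) * Real.sqrt (|deriv (T^[n]) x| * |deriv (T^[n]) y|) := by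
            simp only [hh, one_div]
            rw [Real.sqrt_mul (abs_nonneg _), ← mul_inv, div_eq_mul_inv, inv_inv]
        _ ≤ _ := hG
    have hGS : ∀ x ∈ S, ∀ y ∈ S, x ≤ y →
        (y - x) / (h x * h y) ≤ ∫ u in x..y, (h u)⁻¹ ^ 2 := by
      intro x hx y hy hxy
      exact hGform x hx.1 y hy.1 hxy
        (G_iter hmaps hC2 hSchw hab h0a hb1 hinj hder hx.1 hy.1 hxy hx.2 hy.2)
    -- extension to all pairs, pass 1
    have hprim : ContinuousOn (fun u => ∫ v in a..u, (h v)⁻¹ ^ 2) (Icc a b) := by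
      have hio : MeasureTheory.IntegrableOn (fun v => (h v)⁻¹ ^ 2) (uIcc a b) MeasureTheory.volume := by
        rw [uIcc_of_le hab.le]
        apply ContinuousOn.integrableOn_Icc
        exact (hhcont.inv₀ fun z hz => (hhpos z hz).ne').pow 2
      have := intervalIntegral.continuousOn_primitive_interval hio
      rwa [uIcc_of_le hab.le] at this
    have claim1 : ∀ y ∈ S, ∀ x ∈ Icc a b, x ≤ y →
        (y - x) / (h x * h y) ≤ ∫ u in x..y, (h u)⁻¹ ^ 2 := by
      intro y hy x hx hxy
      rcases eq_or_lt_of_le hxy with rfl | hxy'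
      · simp
      have hyab : y ∈ Icc a b := hy.1
      have hseq : ∀ m : ℕ, ∃ w, w ∈ S ∧ |w - x| < min (1/((m:ℝ)+1)) (y - x) := by
        intro m
        apply hdense x hx
        have h1 : (0:ℝ) < 1/((m:ℝ)+1) := by positivity
        exact lt_min h1 (by linarith)
      choose w hwS hwlt using hseq
      have hwab : ∀ m, w m ∈ Icc a b := fun m => (hwS m).1
      have hwley : ∀ m, w m ≤ y := by
        intro m
        have h1 := (abs_lt.mp (hwlt m)).2
        have h2 : w m - x < y - x := lt_of_lt_of_le h1 (min_le_right _ _)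
        linarith
      have htend : Tendsto w atTop (𝓝 x) := by
        rw [tendsto_iff_dist_tendsto_zero]
        have hb : ∀ m : ℕ, |w m - x| ≤ 1/((m:ℝ)+1) :=
          fun m => ((hwlt m).trans_le (min_le_left _ _)).le
        have := squeeze_zero (fun m => abs_nonneg (w m - x)) hb
          tendsto_one_div_add_atTop_nhds_zero_nat
        simpa [Real.dist_eq] using this
      have htendW : Tendsto w atTop (𝓝[Icc a b] x) :=
        tendsto_nhdsWithin_iff.mpr ⟨htend, Eventually.of_forall hwab⟩
      have hhw : Tendsto (fun m => h (w m)) atTop (𝓝 (h x)) :=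
        (hhcont x hx).tendsto.comp htendW
      have hIa : Tendsto (fun m => ∫ v in a..(w m), (h v)⁻¹ ^ 2) atTop
          (𝓝 (∫ v in a..x, (h v)⁻¹ ^ 2)) := (hprim x hx).tendsto.comp htendW
      have hintay : IntervalIntegrable (fun v => (h v)⁻¹ ^ 2) MeasureTheory.volume a y :=
        intInt hhcont hhpos hyab.1 haab hyab
      have hintax : IntervalIntegrable (fun v => (h v)⁻¹ ^ 2) MeasureTheory.volume a x :=
        intInt hhcont hhpos hx.1 haab hx
      have hGm : ∀ m, (y - w m) / (h (w m) * h y)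
          ≤ (∫ v in a..y, (h v)⁻¹ ^ 2) - ∫ v in a..(w m), (h v)⁻¹ ^ 2 := by
        intro m
        have hG := hGS (w m) (hwS m) y hy (hwley m)
        have hintaw : IntervalIntegrable (fun v => (h v)⁻¹ ^ 2) MeasureTheory.volume a (w m) :=
          intInt hhcont hhpos (hwab m).1 haab (hwab m)
        rwa [← integral_interval_sub_left hintay hintaw] at hG
      have hL : Tendsto (fun m => (y - w m) / (h (w m) * h y)) atTop
          (𝓝 ((y - x) / (h x * h y))) := by
        apply Tendsto.div (tendsto_const_nhds.sub htend) (hhw.mul tendsto_const_nhds)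
        exact (mul_pos (hhpos x hx) (hhpos y hyab)).ne'
      have hR : Tendsto (fun m => (∫ v in a..y, (h v)⁻¹ ^ 2) - ∫ v in a..(w m), (h v)⁻¹ ^ 2)
          atTop (𝓝 ((∫ v in a..y, (h v)⁻¹ ^ 2) - ∫ v in a..x, (h v)⁻¹ ^ 2)) :=
        tendsto_const_nhds.sub hIa
      have hle := le_of_tendsto_of_tendsto' hL hR hGm
      rwa [integral_interval_sub_left hintay hintax] at hle
    -- pass 2
    have claim2 : ∀ x ∈ Icc a b, ∀ y ∈ Icc a b, x ≤ y →
        (y - x) / (h x * h y) ≤ ∫ u in x..y, (h u)⁻¹ ^ 2 := by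
      intro x hx y hy hxy
      rcases eq_or_lt_of_le hxy with rfl | hxy'
      · simp
      have hseq : ∀ m : ℕ, ∃ w, w ∈ S ∧ |w - y| < min (1/((m:ℝ)+1)) (y - x) := by
        intro m
        apply hdense y hy
        have h1 : (0:ℝ) < 1/((m:ℝ)+1) := by positivity
        exact lt_min h1 (by linarith)
      choose w hwS hwlt using hseq
      have hwab : ∀ m, w m ∈ Icc a b := fun m => (hwS m).1
      have hwgex : ∀ m, x ≤ w m := by
        intro m
        have h1 := (abs_lt.mp (hwlt m)).1
        have h2 : -(y - x) < w m - y := lt_of_le_of_lt (neg_le_neg (min_le_right _ _)) h1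
        linarith
      have htend : Tendsto w atTop (𝓝 y) := by
        rw [tendsto_iff_dist_tendsto_zero]
        have hb : ∀ m : ℕ, |w m - y| ≤ 1/((m:ℝ)+1) :=
          fun m => ((hwlt m).trans_le (min_le_left _ _)).le
        have := squeeze_zero (fun m => abs_nonneg (w m - y)) hb
          tendsto_one_div_add_atTop_nhds_zero_nat
        simpa [Real.dist_eq] using this
      have htendW : Tendsto w atTop (𝓝[Icc a b] y) :=
        tendsto_nhdsWithin_iff.mpr ⟨htend, Eventually.of_forall hwab⟩
      have hhw : Tendsto (fun m => h (w m)) atTop (𝓝 (h y)) :=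
        (hhcont y hy).tendsto.comp htendW
      have hIa : Tendsto (fun m => ∫ v in a..(w m), (h v)⁻¹ ^ 2) atTop
          (𝓝 (∫ v in a..y, (h v)⁻¹ ^ 2)) := (hprim y hy).tendsto.comp htendW
      have hintay : IntervalIntegrable (fun v => (h v)⁻¹ ^ 2) MeasureTheory.volume a y :=
        intInt hhcont hhpos hy.1 haab hy
      have hintax : IntervalIntegrable (fun v => (h v)⁻¹ ^ 2) MeasureTheory.volume a x :=
        intInt hhcont hhpos hx.1 haab hx
      have hGm : ∀ m, (w m - x) / (h x * h (w m))
          ≤ (∫ v in a..(w m), (h v)⁻¹ ^ 2) - ∫ v in a..x, (h v)⁻¹ ^ 2 := by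
        intro m
        have hG := claim1 (w m) (hwS m) x hx (hwgex m)
        have hintaw : IntervalIntegrable (fun v => (h v)⁻¹ ^ 2) MeasureTheory.volume a (w m) :=
          intInt hhcont hhpos (hwab m).1 haab (hwab m)
        rwa [← integral_interval_sub_left hintaw hintax] at hG
      have hL : Tendsto (fun m => (w m - x) / (h x * h (w m))) atTop
          (𝓝 ((y - x) / (h x * h y))) := by
        apply Tendsto.div (htend.sub tendsto_const_nhds) (tendsto_const_nhds.mul hhw)
        exact (mul_pos (hhpos x hx) (hhpos y hy)).ne'
      have hR : Tendsto (fun m => (∫ v in a..(w m), (h v)⁻¹ ^ 2) - ∫ v in a..x, (h v)⁻¹ ^ 2)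
          atTop (𝓝 ((∫ v in a..y, (h v)⁻¹ ^ 2) - ∫ v in a..x, (h v)⁻¹ ^ 2)) :=
        hIa.sub tendsto_const_nhds
      have hle := le_of_tendsto_of_tendsto' hL hR hGm
      rwa [integral_interval_sub_left hintay hintax] at hle
    -- convexity
    have hconvH : ConvexOn ℝ (Icc a b) h := convexOn_of_G hhcont hhpos claim2
    -- scaled neighborhood hypotheses in integral form
    have hs1' : δ * ∫ u in c..d, (h u)⁻¹ ^ 2 ≤ ∫ u in a..c, (h u)⁻¹ ^ 2 := by
      rw [← habs_int c hcab d hdab hcd, ← habs_int a haab c hcab hac]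
      exact hscale1
    have hs2' : δ * ∫ u in c..d, (h u)⁻¹ ^ 2 ≤ ∫ u in d..b, (h u)⁻¹ ^ 2 := by
      rw [← habs_int c hcab d hdab hcd, ← habs_int d hdab b hbab hdb]
      exact hscale2
    have hts := koebe_both hδ hac hcd hdb hconvH hhcont hhpos hs1' hs2' s hs t ht
    -- conclude
    have hspos := hhpos s hsab
    have htpos := hhpos t htab
    have hKpos : (0:ℝ) < (1 + δ) / δ := by positivity
    have hsq : h t ^ 2 ≤ ((1 + δ) / δ) ^ 2 * h s ^ 2 := by nlinarith [hts, htpos, hspos]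
    rw [hhinv s hsab, hhinv t htab, inv_pow, inv_pow]
    have hs2p : (0:ℝ) < h s ^ 2 := by positivity
    have ht2p : (0:ℝ) < h t ^ 2 := by positivity
    have e : ((1 + δ) / δ) ^ 2 * (h t ^ 2)⁻¹ = ((1 + δ) / δ) ^ 2 / h t ^ 2 :=
      (div_eq_mul_inv _ _).symm
    rw [e, ← one_div, div_le_div_iff₀ hs2p ht2p]
    nlinarith [hsq]
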